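/- Let B ⊆ [d]×[d] be a board and B′ = ([d]×[d]) ∖ B its complement. Then R(B′; i) = (−1)^d · R(B; −i−1) as an identity of polynomials in i. -/
import Mathlib


open scoped Classical
open Finset Relation

noncomputable section

/-- The falling factorial `t(t-1)⋯(t-k+1)`. -/
def ffall {A : Type*} [CommRing A] (t : A) (k : ℕ) : A :=
  ∏ m ∈ Finset.range k, (t - (m : A))

/-- A placement of non-taking rooks: no two squares in the same row or column. -/
def NonTaking {d : ℕ} (R : Finset (Fin d × Fin d)) : Prop :=
  ∀ a ∈ R, ∀ b ∈ R, (a.1 = b.1 ∨ a.2 = b.2) → a = b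

/-- The rook number `r_k^B`: the number of ways of placing `k` non-taking rooks on `B`. -/
def rookNum {d : ℕ} (B : Finset (Fin d × Fin d)) (k : ℕ) : ℕ :=
  ((Finset.powersetCard k B).filter NonTaking).card

/-- The factorial polynomial `R(B; i) = ∑_k r_k^B i^{\underline{d-k}}`. -/
def rookPoly (d : ℕ) (B : Finset (Fin d × Fin d)) : Polynomial ℚ :=
  ∑ k ∈ Finset.range (d + 1), (rookNum B k : ℚ) • ffall Polynomial.X (d - k)

lemma nonTaking_of_subset {d : ℕ} {R S : Finset (Fin d × Fin d)} (h : R ⊆ S)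
    (hS : NonTaking S) : NonTaking R :=
  fun a ha b hb hab => hS a (h ha) b (h hb) hab

lemma nonTaking_card_le {d : ℕ} {T : Finset (Fin d × Fin d)} (hT : NonTaking T) :
    T.card ≤ d := by
  have h : T.card = (T.image Prod.fst).card :=
    (Finset.card_image_of_injOn fun x hx y hy hxy => hT x hx y hy (Or.inl hxy)).symm
  rw [h]
  calc (T.image Prod.fst).card ≤ Fintype.card (Fin d) := Finset.card_le_univ _
    _ = d := Fintype.card_fin d

lemma nat_key (n b m : ℕ) :
    n.choose (m+1) * b.choose (m+1) * (m+1).factorial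
      + b * (n.choose m * (b-1).choose m * m.factorial)
    = (n+1).choose (m+1) * b.choose (m+1) * (m+1).factorial := by
  have h : b * (b-1).choose m = b.choose (m+1) * (m+1) := by
    cases b with
    | zero => simp
    | succ b => simpa using Nat.add_one_mul_choose_eq b m
  have h2 : b * (n.choose m * (b-1).choose m * m.factorial)
      = n.choose m * b.choose (m+1) * (m+1).factorial := by
    rw [Nat.factorial_succ]
    calc b * (n.choose m * (b-1).choose m * m.factorial)
        = n.choose m * (b * (b-1).choose m) * m.factorial := by ring
      _ = n.choose m * (b.choose (m+1) * (m+1)) * m.factorial := by rw [h]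
      _ = n.choose m * b.choose (m+1) * ((m+1) * m.factorial) := by ring
  rw [h2, Nat.choose_succ_succ, add_mul, add_mul]
  ring

/-- The number of placements of `m` non-taking rooks on a full rectangular board. -/
lemma count_nontaking {d : ℕ} (S₁ : Finset (Fin d)) : ∀ (S₂ : Finset (Fin d)) (m : ℕ),
    ((Finset.powersetCard m (S₁ ×ˢ S₂)).filter NonTaking).card
      = S₁.card.choose m * S₂.card.choose m * m.factorial := by
  induction S₁ using Finset.cons_induction with
  | empty =>
    intro S₂ m
    cases m with
    | zero =>
      have : NonTaking (∅ : Finset (Fin d × Fin d)) := by intro a ha; simp at ha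
      simp [Finset.filter_singleton, this]
    | succ m =>
      rw [Finset.empty_product, Finset.powersetCard_eq_empty.mpr (by simp)]
      simp
  | cons a s ha ih =>
    intro S₂ m
    cases m with
    | zero =>
      have : NonTaking (∅ : Finset (Fin d × Fin d)) := by intro a ha; simp at ha
      simp [Finset.filter_singleton, this]
    | succ m =>
      set F := ((Finset.powersetCard (m+1) ((cons a s ha) ×ˢ S₂)).filter NonTaking) with hF
      have hsplit := Finset.card_filter_add_card_filter_not
        (s := F) (p := fun R => ∃ c, (a, c) ∈ R)
      -- the part avoiding row a
      have h0 : F.filter (fun R => ¬ ∃ c, (a, c) ∈ R)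
          = (Finset.powersetCard (m+1) (s ×ˢ S₂)).filter NonTaking := by
        ext R
        simp only [hF, Finset.mem_filter, Finset.mem_powersetCard]
        constructor
        · rintro ⟨⟨⟨hsub, hcard⟩, hnt⟩, hno⟩
          refine ⟨⟨?_, hcard⟩, hnt⟩
          intro x hx
          have hx' := hsub hx
          rw [Finset.mem_product] at hx' ⊢
          rcases Finset.mem_cons.mp hx'.1 with h1 | h1
          · exact absurd ⟨x.2, by rwa [← h1, Prod.mk.eta] ⟩ hno
          · exact ⟨h1, hx'.2⟩
        · rintro ⟨⟨hsub, hcard⟩, hnt⟩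
          refine ⟨⟨⟨?_, hcard⟩, hnt⟩, ?_⟩
          · intro x hx
            have hx' := hsub hx
            rw [Finset.mem_product] at hx' ⊢
            exact ⟨Finset.mem_cons.mpr (Or.inr hx'.1), hx'.2⟩
          · rintro ⟨c, hc⟩
            have := (Finset.mem_product.mp (hsub hc)).1
            exact ha this
      -- the part using row a
      have h1 : F.filter (fun R => ∃ c, (a, c) ∈ R)
          = S₂.biUnion (fun c =>
              ((Finset.powersetCard m (s ×ˢ (S₂.erase c))).filter NonTaking).image
                (insert (a, c))) := by
        ext R
        simp only [hF, Finset.mem_filter, Finset.mem_powersetCard, Finset.mem_biUnion,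
          Finset.mem_image]
        constructor
        · rintro ⟨⟨⟨hsub, hcard⟩, hnt⟩, c, hc⟩
          have hcS₂ : c ∈ S₂ := (Finset.mem_product.mp (hsub hc)).2
          refine ⟨c, hcS₂, R.erase (a, c), ⟨⟨?_, ?_⟩, ?_⟩, Finset.insert_erase hc⟩
          · intro x hx
            have hxR := Finset.mem_of_mem_erase hx
            have hxne := Finset.ne_of_mem_erase hx
            have hx' := Finset.mem_product.mp (hsub hxR)
            rw [Finset.mem_product]
            constructor
            · rcases Finset.mem_cons.mp hx'.1 with h2 | h2
              · exact absurd (hnt x hxR (a, c) hc (Or.inl h2)) hxne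
              · exact h2
            · refine Finset.mem_erase.mpr ⟨?_, hx'.2⟩
              intro h2
              exact hxne (hnt x hxR (a, c) hc (Or.inr h2))
          · simp [Finset.card_erase_of_mem hc, hcard]
          · exact nonTaking_of_subset (Finset.erase_subset _ _) hnt
        · rintro ⟨c, hcS₂, R₀, ⟨⟨hsub, hcard⟩, hnt⟩, rfl⟩
          have hnotin : (a, c) ∉ R₀ := by
            intro h
            exact ha (Finset.mem_product.mp (hsub h)).1
          have hR₀a : ∀ x ∈ R₀, x.1 ≠ a ∧ x.2 ≠ c := by
            intro x hx
            have hx' := Finset.mem_product.mp (hsub hx)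
            exact ⟨fun h => ha (h ▸ hx'.1), Finset.ne_of_mem_erase hx'.2⟩
          have hnt' : NonTaking (insert (a, c) R₀) := by
            intro x hx y hy hxy
            rcases Finset.mem_insert.mp hx with rfl | hx <;>
              rcases Finset.mem_insert.mp hy with h | h
            · rw [h]
            · rcases hxy with h2 | h2
              · exact absurd h2.symm (hR₀a y h).1
              · exact absurd h2.symm (hR₀a y h).2
            · subst h
              rcases hxy with h2 | h2
              · exact absurd h2 (hR₀a x hx).1
              · exact absurd h2 (hR₀a x hx).2
            · exact hnt x hx y h hxy
          refine ⟨⟨⟨?_, ?_⟩, hnt'⟩, c, Finset.mem_insert_self _ _⟩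
          · intro x hx
            rcases Finset.mem_insert.mp hx with rfl | hx
            · exact Finset.mem_product.mpr ⟨Finset.mem_cons_self _ _, hcS₂⟩
            · have hx' := Finset.mem_product.mp (hsub hx)
              exact Finset.mem_product.mpr ⟨Finset.mem_cons.mpr (Or.inr hx'.1),
                Finset.mem_of_mem_erase hx'.2⟩
          · rw [Finset.card_insert_of_notMem hnotin, hcard]
      have hGcard : ∀ c ∈ S₂,
          (((Finset.powersetCard m (s ×ˢ (S₂.erase c))).filter NonTaking).image
              (insert (a, c))).card
            = (#s).choose m * (#S₂ - 1).choose m * m.factorial := by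
        intro c hc
        rw [Finset.card_image_of_injOn ?_, ih, Finset.card_erase_of_mem hc]
        intro R₀ hR₀ R₁ hR₁ hins
        simp only [Finset.mem_coe, Finset.mem_filter, Finset.mem_powersetCard] at hR₀ hR₁
        have h₀ : (a,c) ∉ R₀ := fun h => ha (Finset.mem_product.mp (hR₀.1.1 h)).1
        have h₁ : (a,c) ∉ R₁ := fun h => ha (Finset.mem_product.mp (hR₁.1.1 h)).1
        rw [← Finset.erase_insert h₀, ← Finset.erase_insert h₁, hins]
      have hdisj : ∀ c ∈ S₂, ∀ c' ∈ S₂, c ≠ c' →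
          Disjoint
            (((Finset.powersetCard m (s ×ˢ (S₂.erase c))).filter NonTaking).image
              (insert (a, c)))
            (((Finset.powersetCard m (s ×ˢ (S₂.erase c'))).filter NonTaking).image
              (insert (a, c'))) := by
        intro c hc c' hc' hne
        rw [Finset.disjoint_left]
        rintro R hRc hRc'
        simp only [Finset.mem_image, Finset.mem_filter, Finset.mem_powersetCard] at hRc hRc'
        obtain ⟨R₀, ⟨⟨hsub₀, _⟩, _⟩, rfl⟩ := hRc
        obtain ⟨R₁, ⟨⟨hsub₁, _⟩, _⟩, hins⟩ := hRc'
        have hmem : (a, c') ∈ insert (a, c) R₀ := by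
          rw [← hins]; exact Finset.mem_insert_self _ _
        rcases Finset.mem_insert.mp hmem with h2 | h2
        · exact hne ((Prod.ext_iff.mp h2.symm).2)
        · exact ha (Finset.mem_product.mp (hsub₀ h2)).1
      have hsum : (F.filter (fun R => ∃ c, (a, c) ∈ R)).card
          = S₂.card * ((#s).choose m * (#S₂ - 1).choose m * m.factorial) := by
        rw [h1, Finset.card_biUnion hdisj, Finset.sum_congr rfl hGcard, Finset.sum_const,
          smul_eq_mul]
      rw [← hsplit, hsum, h0, ih, Finset.card_cons, add_comm]
      exact nat_key (#s) (#S₂) m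

/-- Extension count: the number of non-taking `k`-placements containing a fixed
non-taking `j`-placement `T`. -/
lemma ext_count {d : ℕ} (T : Finset (Fin d × Fin d)) (hT : NonTaking T) {j k : ℕ}
    (hj : T.card = j) (hjk : j ≤ k) :
    ((Finset.powersetCard k (Finset.univ : Finset (Fin d × Fin d))).filter
        (fun R => NonTaking R ∧ T ⊆ R)).card
      = (d - j).choose (k - j) * (d - j).choose (k - j) * (k - j).factorial := by
  set S₁ : Finset (Fin d) := Finset.univ \ T.image Prod.fst with hS₁
  set S₂ : Finset (Fin d) := Finset.univ \ T.image Prod.snd with hS₂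
  have hcard₁ : S₁.card = d - j := by
    rw [hS₁, Finset.card_sdiff_of_subset (Finset.subset_univ _), Finset.card_univ, Fintype.card_fin,
      Finset.card_image_of_injOn (fun x hx y hy hxy => hT x hx y hy (Or.inl hxy)), hj]
  have hcard₂ : S₂.card = d - j := by
    rw [hS₂, Finset.card_sdiff_of_subset (Finset.subset_univ _), Finset.card_univ, Fintype.card_fin,
      Finset.card_image_of_injOn (fun x hx y hy hxy => hT x hx y hy (Or.inr hxy)), hj]
  have key : ((Finset.powersetCard k (Finset.univ : Finset (Fin d × Fin d))).filter
        (fun R => NonTaking R ∧ T ⊆ R)).card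
      = ((Finset.powersetCard (k - j) (S₁ ×ˢ S₂)).filter NonTaking).card := by
    apply Finset.card_bij' (fun R _ => R \ T) (fun R₀ _ => R₀ ∪ T)
    · -- forward maps into target
      rintro R hR
      simp only [Finset.mem_filter, Finset.mem_powersetCard] at hR
      obtain ⟨⟨-, hcard⟩, hnt, hTR⟩ := hR
      simp only [Finset.mem_filter, Finset.mem_powersetCard]
      refine ⟨⟨?_, ?_⟩, nonTaking_of_subset (Finset.sdiff_subset) hnt⟩
      · intro x hx
        obtain ⟨hxR, hxT⟩ := Finset.mem_sdiff.mp hx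
        rw [Finset.mem_product, hS₁, hS₂]
        constructor <;> rw [Finset.mem_sdiff] <;> refine ⟨Finset.mem_univ _, ?_⟩ <;>
          rw [Finset.mem_image] <;> rintro ⟨t, htT, hteq⟩
        · exact hxT ((hnt x hxR t (hTR htT) (Or.inl hteq.symm)) ▸ htT)
        · exact hxT ((hnt x hxR t (hTR htT) (Or.inr hteq.symm)) ▸ htT)
      · rw [Finset.card_sdiff_of_subset hTR, hcard, hj]
    · -- backward maps into source
      rintro R₀ hR₀
      simp only [Finset.mem_filter, Finset.mem_powersetCard] at hR₀
      obtain ⟨⟨hsub, hcard⟩, hnt⟩ := hR₀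
      have hrow : ∀ x ∈ R₀, x.1 ∉ T.image Prod.fst ∧ x.2 ∉ T.image Prod.snd := by
        intro x hx
        have := Finset.mem_product.mp (hsub hx)
        rw [hS₁, Finset.mem_sdiff] at this
        exact ⟨this.1.2, (Finset.mem_sdiff.mp this.2).2⟩
      have hdisj : Disjoint R₀ T := by
        rw [Finset.disjoint_left]
        intro x hx hxT
        exact (hrow x hx).1 (Finset.mem_image.mpr ⟨x, hxT, rfl⟩)
      simp only [Finset.mem_filter, Finset.mem_powersetCard]
      refine ⟨⟨Finset.subset_univ _, ?_⟩, ?_, Finset.subset_union_right⟩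
      · rw [Finset.card_union_of_disjoint hdisj, hcard, hj]; omega
      · intro x hx y hy hxy
        rcases Finset.mem_union.mp hx with hx' | hx' <;>
          rcases Finset.mem_union.mp hy with hy' | hy'
        · exact hnt x hx' y hy' hxy
        · exfalso
          rcases hxy with h2 | h2
          · exact (hrow x hx').1 (Finset.mem_image.mpr ⟨y, hy', h2.symm⟩)
          · exact (hrow x hx').2 (Finset.mem_image.mpr ⟨y, hy', h2.symm⟩)
        · exfalso
          rcases hxy with h2 | h2
          · exact (hrow y hy').1 (Finset.mem_image.mpr ⟨x, hx', h2⟩)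
          · exact (hrow y hy').2 (Finset.mem_image.mpr ⟨x, hx', h2⟩)
        · exact hT x hx' y hy' hxy
    · -- left inverse
      rintro R hR
      simp only [Finset.mem_filter, Finset.mem_powersetCard] at hR
      exact Finset.sdiff_union_of_subset hR.2.2
    · -- right inverse
      rintro R₀ hR₀
      simp only [Finset.mem_filter, Finset.mem_powersetCard] at hR₀
      have hdisj : Disjoint R₀ T := by
        rw [Finset.disjoint_left]
        intro x hx hxT
        have := Finset.mem_product.mp (hR₀.1.1 hx)
        rw [hS₁, Finset.mem_sdiff] at this
        exact this.1.2 (Finset.mem_image.mpr ⟨x, hxT, rfl⟩)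
      rw [Finset.union_sdiff_cancel_right hdisj]
  rw [key, count_nontaking, hcard₁, hcard₂]

/-- Inclusion–exclusion for rook numbers of the complementary board. -/
lemma rookNum_compl {d : ℕ} (B : Finset (Fin d × Fin d)) (k : ℕ) :
    (rookNum (Finset.univ \ B) k : ℚ)
      = ∑ T ∈ B.powerset.filter NonTaking, (-1 : ℚ) ^ T.card *
          (((Finset.powersetCard k (Finset.univ : Finset (Fin d × Fin d))).filter
              (fun R => NonTaking R ∧ T ⊆ R)).card : ℚ) := by
  set K := (Finset.powersetCard k (Finset.univ : Finset (Fin d × Fin d))).filter NonTaking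
    with hK
  have h1 : (Finset.powersetCard k (Finset.univ \ B)).filter NonTaking
      = K.filter (fun R => Disjoint B R) := by
    ext R
    simp only [hK, Finset.mem_filter, Finset.mem_powersetCard, Finset.subset_sdiff]
    constructor
    · rintro ⟨⟨⟨ht, hd⟩, hc⟩, hnt⟩
      exact ⟨⟨⟨ht, hc⟩, hnt⟩, hd.symm⟩
    · rintro ⟨⟨⟨ht, hc⟩, hnt⟩, hd⟩
      exact ⟨⟨⟨ht, hd.symm⟩, hc⟩, hnt⟩
  have h2 : ∀ R ∈ K, (if Disjoint B R then (1:ℚ) else 0)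
      = ∑ T ∈ B.powerset.filter NonTaking, (if T ⊆ R then (-1:ℚ)^T.card else 0) := by
    intro R hR
    have hnt : NonTaking R := (Finset.mem_filter.mp hR).2
    have hsub : (B ∩ R).powerset ⊆ B.powerset.filter NonTaking := by
      intro T hT
      rw [Finset.mem_powerset] at hT
      rw [Finset.mem_filter, Finset.mem_powerset]
      exact ⟨hT.trans Finset.inter_subset_left,
        nonTaking_of_subset (hT.trans Finset.inter_subset_right) hnt⟩
    have hzero : ∀ T ∈ B.powerset.filter NonTaking, T ∉ (B ∩ R).powerset →
        (if T ⊆ R then (-1:ℚ)^T.card else 0) = 0 := by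
      intro T hT hT'
      rw [if_neg]
      intro hTR
      exact hT' (Finset.mem_powerset.mpr
        (Finset.subset_inter (Finset.mem_powerset.mp (Finset.mem_filter.mp hT).1) hTR))
    rw [← Finset.sum_subset hsub hzero]
    rw [Finset.sum_congr rfl (fun T hT =>
      if_pos ((Finset.mem_powerset.mp hT).trans Finset.inter_subset_right))]
    have hps : ∑ m ∈ (B ∩ R).powerset, (-1:ℚ)^m.card
        = if B ∩ R = ∅ then 1 else 0 := by
      have h := Finset.sum_powerset_neg_one_pow_card (x := B ∩ R)
      have h2 := congrArg (fun z : ℤ => (z : ℚ)) h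
      push_cast at h2
      exact h2
    rw [hps]
    by_cases hd : Disjoint B R
    · rw [if_pos hd, if_pos (Finset.disjoint_iff_inter_eq_empty.mp hd)]
    · rw [if_neg hd, if_neg (fun h => hd (Finset.disjoint_iff_inter_eq_empty.mpr h))]
  calc (rookNum (Finset.univ \ B) k : ℚ)
      = ((K.filter (fun R => Disjoint B R)).card : ℚ) := by rw [rookNum, h1]
    _ = ∑ R ∈ K, (if Disjoint B R then (1:ℚ) else 0) := by rw [Finset.sum_boole]
    _ = ∑ R ∈ K, ∑ T ∈ B.powerset.filter NonTaking,
          (if T ⊆ R then (-1:ℚ)^T.card else 0) := Finset.sum_congr rfl h2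
    _ = ∑ T ∈ B.powerset.filter NonTaking, ∑ R ∈ K,
          (if T ⊆ R then (-1:ℚ)^T.card else 0) := Finset.sum_comm
    _ = ∑ T ∈ B.powerset.filter NonTaking, (-1 : ℚ) ^ T.card *
          (((Finset.powersetCard k (Finset.univ : Finset (Fin d × Fin d))).filter
              (fun R => NonTaking R ∧ T ⊆ R)).card : ℚ) := by
      refine Finset.sum_congr rfl fun T hT => ?_
      rw [← Finset.sum_filter, Finset.sum_const, hK, Finset.filter_filter]
      rw [nsmul_eq_mul, mul_comm]

lemma nat_key2 (n i : ℕ) (h : i ≤ n) :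
    ((n+1).choose (i+1))^2 * (i+1).factorial
      = (n.choose (i+1))^2 * (i+1).factorial
        + (n.choose i)^2 * i.factorial * (n+1+(n-i)) := by
  obtain ⟨w, rfl⟩ := Nat.exists_eq_add_of_le h
  have hP : (i+w).choose (i+1) * (i+1) = (i+w).choose i * w := by
    have := Nat.choose_succ_right_eq (i+w) i
    simpa [Nat.add_sub_cancel_left] using this
  have hsub : i + w - i = w := Nat.add_sub_cancel_left i w
  rw [hsub, Nat.choose_succ_succ, Nat.factorial_succ]
  set a := (i+w).choose (i+1)
  set b := (i+w).choose i
  have h3 : b * (a * (i+1)) = b * (b * w) := by rw [hP]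
  calc (b + a)^2 * ((i+1) * i.factorial)
      = a^2*((i+1)*i.factorial) + (b*(a*(i+1)))*(2*i.factorial)
        + b^2*((i+1)*i.factorial) := by ring
    _ = a^2*((i+1)*i.factorial) + (b*(b*w))*(2*i.factorial)
        + b^2*((i+1)*i.factorial) := by rw [h3]
    _ = a^2*((i+1)*i.factorial) + b^2*i.factorial*((i+w+1)+w) := by ring

/-- The factorial rook polynomial of the full `n × n` board. -/
lemma Pn_eq (n : ℕ) :
    ∑ m ∈ Finset.range (n+1),
        (((n.choose m)^2 * m.factorial : ℕ) : ℚ) • ffall (Polynomial.X : Polynomial ℚ) (n - m)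
      = ∏ i ∈ Finset.range n, (Polynomial.X + Polynomial.C ((i : ℚ) + 1)) := by
  induction n with
  | zero => simp [ffall]
  | succ n ih =>
    have ffall_mul : ∀ w : ℕ,
        ffall (Polynomial.X : Polynomial ℚ) w * (Polynomial.X + Polynomial.C ((n : ℚ) + 1))
          = ffall Polynomial.X (w+1) + (((n+1+w : ℕ)) : ℚ) • ffall Polynomial.X w := by
      intro w
      rw [show ffall (Polynomial.X : Polynomial ℚ) (w+1)
          = ffall Polynomial.X w * (Polynomial.X - (w : Polynomial ℚ)) from
          Finset.prod_range_succ _ _,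
        Polynomial.smul_eq_C_mul]
      push_cast
      simp only [← Polynomial.C_eq_natCast, map_add, map_one]
      ring
    set A := ∑ i ∈ Finset.range n,
        (((n.choose (i+1))^2 * (i+1).factorial : ℕ) : ℚ) •
          ffall (Polynomial.X : Polynomial ℚ) (n - i) with hA
    set Bp := ∑ i ∈ Finset.range (n+1),
        (((n.choose i)^2 * i.factorial * (n+1+(n-i)) : ℕ) : ℚ) •
          ffall (Polynomial.X : Polynomial ℚ) (n - i) with hB
    have hL : ∑ m ∈ Finset.range (n+1+1),
        ((((n+1).choose m)^2 * m.factorial : ℕ) : ℚ) •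
          ffall (Polynomial.X : Polynomial ℚ) (n+1 - m)
        = A + Bp + ffall Polynomial.X (n+1) := by
      rw [Finset.sum_range_succ']
      simp only [Nat.add_sub_add_right]
      have hsplit : ∀ i ∈ Finset.range (n+1),
          ((((n+1).choose (i+1))^2 * (i+1).factorial : ℕ) : ℚ) •
            ffall (Polynomial.X : Polynomial ℚ) (n - i)
          = (((n.choose (i+1))^2 * (i+1).factorial : ℕ) : ℚ) • ffall Polynomial.X (n - i)
            + (((n.choose i)^2 * i.factorial * (n+1+(n-i)) : ℕ) : ℚ) •
                ffall Polynomial.X (n - i) := by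
        intro i hi
        rw [← add_smul, ← Nat.cast_add, nat_key2 n i (Nat.lt_succ_iff.mp (Finset.mem_range.mp hi))]
      rw [Finset.sum_congr rfl hsplit, Finset.sum_add_distrib]
      have h0 : ∑ i ∈ Finset.range (n+1),
          (((n.choose (i+1))^2 * (i+1).factorial : ℕ) : ℚ) •
            ffall (Polynomial.X : Polynomial ℚ) (n - i) = A := by
        rw [Finset.sum_range_succ, hA]
        simp [Nat.choose_succ_self]
      rw [h0, ← hB]
      simp
    have hR : ∏ i ∈ Finset.range (n+1), (Polynomial.X + Polynomial.C ((i : ℚ) + 1))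
        = A + Bp + ffall Polynomial.X (n+1) := by
      rw [Finset.prod_range_succ, ← ih, Finset.sum_mul]
      have hterm : ∀ m ∈ Finset.range (n+1),
          (((n.choose m)^2 * m.factorial : ℕ) : ℚ) •
              ffall (Polynomial.X:Polynomial ℚ) (n - m) *
              (Polynomial.X + Polynomial.C ((n : ℚ) + 1))
          = (((n.choose m)^2 * m.factorial : ℕ) : ℚ) • ffall Polynomial.X ((n - m) + 1)
            + (((n.choose m)^2 * m.factorial * (n+1+(n-m)) : ℕ) : ℚ) •
                ffall Polynomial.X (n - m) := by
        intro m hm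
        rw [smul_mul_assoc, ffall_mul (n - m), smul_add, smul_smul]
        congr 1
        push_cast
        ring
      rw [Finset.sum_congr rfl hterm, Finset.sum_add_distrib, ← hB]
      have h1 : ∑ m ∈ Finset.range (n+1),
          (((n.choose m)^2 * m.factorial : ℕ) : ℚ) •
            ffall (Polynomial.X:Polynomial ℚ) ((n - m) + 1)
          = A + ffall Polynomial.X (n+1) := by
        rw [Finset.sum_range_succ']
        congr 1
        · rw [hA]
          apply Finset.sum_congr rfl
          intro i hi
          have hlt : i < n := Finset.mem_range.mp hi
          have : n - (i+1) + 1 = n - i := by omega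
          rw [this]
        · simp
      rw [h1]
      abel
    rw [hR]
    exact hL

lemma prod_eq_neg_ffall (m : ℕ) :
    ∏ i ∈ Finset.range m, ((Polynomial.X : Polynomial ℚ) + Polynomial.C ((i:ℚ)+1))
      = (-1:ℚ)^m • ffall (-Polynomial.X - 1 : Polynomial ℚ) m := by
  rw [ffall, Polynomial.smul_eq_C_mul, map_pow, map_neg, map_one]
  rw [show ((-1 : Polynomial ℚ))^m = ∏ _i ∈ Finset.range m, (-1 : Polynomial ℚ) by
    rw [Finset.prod_const, Finset.card_range]]
  rw [← Finset.prod_mul_distrib]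
  apply Finset.prod_congr rfl
  intro i _
  simp only [← Polynomial.C_eq_natCast, map_add, map_one]
  ring

lemma ffall_comp (q : Polynomial ℚ) (k : ℕ) :
    (ffall (Polynomial.X : Polynomial ℚ) k).comp q = ffall q k := by
  rw [ffall, ffall, Polynomial.prod_comp]
  apply Finset.prod_congr rfl
  intro i _
  simp [Polynomial.sub_comp, Polynomial.X_comp, Polynomial.natCast_comp]

/-- The inner sum over `k` for a fixed non-taking placement `T` on `B`. -/
lemma rook_inner_sum {d : ℕ} (T : Finset (Fin d × Fin d)) (hT : NonTaking T) :
    ∑ k ∈ Finset.range (d+1),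
        ((-1:ℚ) ^ T.card *
          (((Finset.powersetCard k (Finset.univ : Finset (Fin d × Fin d))).filter
              (fun R => NonTaking R ∧ T ⊆ R)).card : ℚ)) •
          ffall (Polynomial.X : Polynomial ℚ) (d - k)
      = (-1:ℚ)^d • ffall (-Polynomial.X - 1 : Polynomial ℚ) (d - T.card) := by
  set j := T.card with hj
  have hjd : j ≤ d := nonTaking_card_le hT
  have hzero : ∀ k ∈ Finset.Ico 0 j,
      ((-1:ℚ) ^ j *
          (((Finset.powersetCard k (Finset.univ : Finset (Fin d × Fin d))).filter
              (fun R => NonTaking R ∧ T ⊆ R)).card : ℚ)) •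
          ffall (Polynomial.X : Polynomial ℚ) (d - k) = 0 := by
    intro k hk
    have hk' : k < j := (Finset.mem_Ico.mp hk).2
    have hemp : ((Finset.powersetCard k (Finset.univ : Finset (Fin d × Fin d))).filter
        (fun R => NonTaking R ∧ T ⊆ R)) = ∅ := by
      rw [Finset.eq_empty_iff_forall_notMem]
      intro R hR
      simp only [Finset.mem_filter, Finset.mem_powersetCard] at hR
      have := Finset.card_le_card hR.2.2
      omega
    rw [hemp]
    simp
  rw [Finset.range_eq_Ico,
    ← Finset.sum_Ico_consecutive _ (Nat.zero_le j) (by omega : j ≤ d+1),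
    Finset.sum_eq_zero hzero, zero_add, Finset.sum_Ico_eq_sum_range,
    show d + 1 - j = (d - j) + 1 by omega]
  have hterm : ∀ i ∈ Finset.range ((d-j)+1),
      ((-1:ℚ) ^ j *
          (((Finset.powersetCard (j+i) (Finset.univ : Finset (Fin d × Fin d))).filter
              (fun R => NonTaking R ∧ T ⊆ R)).card : ℚ)) •
          ffall (Polynomial.X : Polynomial ℚ) (d - (j+i))
      = (-1:ℚ)^j • ((((d-j).choose i)^2 * i.factorial : ℕ) : ℚ) •
          ffall (Polynomial.X : Polynomial ℚ) ((d-j) - i) := by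
    intro i _
    have hext := ext_count T hT hj.symm (Nat.le_add_right j i)
    rw [Nat.add_sub_cancel_left] at hext
    rw [hext, show d - (j+i) = (d-j) - i by omega, mul_smul]
    congr 2
    push_cast
    ring
  rw [Finset.sum_congr rfl hterm, ← Finset.smul_sum, Pn_eq (d-j), prod_eq_neg_ffall,
    smul_smul, ← pow_add, show j + (d - j) = d by omega]

theorem factorial_polynomial_reciprocity (d : ℕ) (B : Finset (Fin d × Fin d)) :
    rookPoly d ((Finset.univ : Finset (Fin d × Fin d)) \ B) =
      (-1 : ℚ) ^ d • (rookPoly d B).comp (-Polynomial.X - 1) := by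
  have hstep1 : rookPoly d (Finset.univ \ B)
      = ∑ T ∈ B.powerset.filter NonTaking,
          (-1:ℚ)^d • ffall (-Polynomial.X - 1 : Polynomial ℚ) (d - T.card) := by
    rw [rookPoly]
    have h1 : ∀ k ∈ Finset.range (d+1),
        (rookNum (Finset.univ \ B) k : ℚ) • ffall (Polynomial.X : Polynomial ℚ) (d - k)
        = ∑ T ∈ B.powerset.filter NonTaking,
            ((-1:ℚ)^T.card *
              (((Finset.powersetCard k (Finset.univ : Finset (Fin d × Fin d))).filter
                (fun R => NonTaking R ∧ T ⊆ R)).card : ℚ)) •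
              ffall (Polynomial.X : Polynomial ℚ) (d - k) := by
      intro k _
      rw [rookNum_compl, Finset.sum_smul]
    rw [Finset.sum_congr rfl h1, Finset.sum_comm]
    apply Finset.sum_congr rfl
    intro T hT
    exact rook_inner_sum T (Finset.mem_filter.mp hT).2
  have hstep2 : ∑ T ∈ B.powerset.filter NonTaking,
      (-1:ℚ)^d • ffall (-Polynomial.X - 1 : Polynomial ℚ) (d - T.card)
      = ∑ j ∈ Finset.range (B.card + 1),
          (rookNum B j : ℚ) • ((-1:ℚ)^d • ffall (-Polynomial.X - 1 : Polynomial ℚ) (d - j)) := by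
    rw [Finset.sum_filter, Finset.sum_powerset]
    apply Finset.sum_congr rfl
    intro j _
    have hcongr : ∀ T ∈ Finset.powersetCard j B,
        (if NonTaking T then
            (-1:ℚ)^d • ffall (-Polynomial.X - 1 : Polynomial ℚ) (d - T.card) else 0)
        = (if NonTaking T then
            (-1:ℚ)^d • ffall (-Polynomial.X - 1 : Polynomial ℚ) (d - j) else 0) := by
      intro T hT
      rw [(Finset.mem_powersetCard.mp hT).2]
    rw [Finset.sum_congr rfl hcongr, ← Finset.sum_filter, Finset.sum_const, rookNum,
      ← Nat.cast_smul_eq_nsmul ℚ]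
  have hvanish : ∀ j : ℕ, B.card < j ∨ d < j → rookNum B j = 0 := by
    intro j hj
    rcases hj with hj | hj
    · rw [rookNum, Finset.powersetCard_eq_empty.mpr hj, Finset.filter_empty, Finset.card_empty]
    · rw [rookNum, Finset.card_eq_zero, Finset.eq_empty_iff_forall_notMem]
      intro T hT
      simp only [Finset.mem_filter, Finset.mem_powersetCard] at hT
      have := nonTaking_card_le hT.2
      omega
  have hbridge : ∑ j ∈ Finset.range (B.card + 1),
      (rookNum B j : ℚ) • ((-1:ℚ)^d • ffall (-Polynomial.X - 1 : Polynomial ℚ) (d - j))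
      = ∑ j ∈ Finset.range (d + 1),
          (rookNum B j : ℚ) • ((-1:ℚ)^d • ffall (-Polynomial.X - 1 : Polynomial ℚ) (d - j)) := by
    have big : ∀ N : ℕ, B.card ≤ N → d ≤ N →
        (∑ j ∈ Finset.range (B.card + 1),
          (rookNum B j : ℚ) • ((-1:ℚ)^d • ffall (-Polynomial.X - 1 : Polynomial ℚ) (d - j))
        = ∑ j ∈ Finset.range (N + 1),
          (rookNum B j : ℚ) • ((-1:ℚ)^d • ffall (-Polynomial.X - 1 : Polynomial ℚ) (d - j)))
        ∧ (∑ j ∈ Finset.range (d + 1),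
          (rookNum B j : ℚ) • ((-1:ℚ)^d • ffall (-Polynomial.X - 1 : Polynomial ℚ) (d - j))
        = ∑ j ∈ Finset.range (N + 1),
          (rookNum B j : ℚ) • ((-1:ℚ)^d • ffall (-Polynomial.X - 1 : Polynomial ℚ) (d - j))) := by
      intro N hB hd
      constructor
      · apply Finset.sum_subset
        · intro x hx
          simp only [Finset.mem_range] at hx ⊢
          omega
        · intro x _ hx
          simp only [Finset.mem_range] at hx
          rw [hvanish x (Or.inl (by omega))]
          simp
      · apply Finset.sum_subset
        · intro x hx
          simp only [Finset.mem_range] at hx ⊢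
          omega
        · intro x _ hx
          simp only [Finset.mem_range] at hx
          rw [hvanish x (Or.inr (by omega))]
          simp
    obtain ⟨e1, e2⟩ := big (max B.card d) (le_max_left _ _) (le_max_right _ _)
    rw [e1, e2]
  have hRHS : (-1:ℚ)^d • (rookPoly d B).comp (-Polynomial.X - 1)
      = ∑ j ∈ Finset.range (d+1),
          (rookNum B j : ℚ) • ((-1:ℚ)^d • ffall (-Polynomial.X - 1 : Polynomial ℚ) (d - j)) := by
    rw [rookPoly, Polynomial.sum_comp, Finset.smul_sum]
    apply Finset.sum_congr rfl
    intro j _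
    rw [Polynomial.smul_comp, ffall_comp, smul_comm]
  rw [hstep1, hstep2, hbridge, hRHS]
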